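/- Let L_x, L_y > 0 and let 𝒦² = {(2π n₁/L_x, 2π n₂/L_y) : n₁, n₂ ∈ ℤ} be the reciprocal lattice. For every s > 0 and K > 0, Σ_{k ∈ 𝒦², |k| ≥ K} exp(-s² |k|²/4) ≤ (1 + √2 L_x/(s√π)) (1 + √2 L_y/(s√π)) · exp(-s² K²/8). -/

import Mathlib

set_option maxHeartbeats 2000000
open Real MeasureTheory Set

lemma gauss_summable_nat (b : ℝ) (hb : 0 < b) :
    Summable (fun n : ℕ => Real.exp (-b * (n : ℝ) ^ 2)) := by
  apply Summable.of_nonneg_of_le (fun n => (Real.exp_pos _).le)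
    (f := fun n : ℕ => Real.exp (-b) ^ n)
  · intro n
    rw [← Real.exp_nat_mul]
    apply Real.exp_le_exp.2
    have : (n : ℝ) ≤ (n : ℝ) ^ 2 := by
      have := Nat.le_self_pow two_ne_zero n
      exact_mod_cast this
    nlinarith
  · exact summable_geometric_of_lt_one (Real.exp_pos _).le
      (Real.exp_lt_one_iff.2 (by linarith))

lemma gauss_summable_int (b : ℝ) (hb : 0 < b) :
    Summable (fun n : ℤ => Real.exp (-b * (n : ℝ) ^ 2)) := by
  apply Summable.of_nat_of_neg
  · exact gauss_summable_nat b hb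
  · have := gauss_summable_nat b hb
    convert this using 2 with n
    · rfl
    push_cast
    ring_nf

lemma gauss_tail_nat (b : ℝ) (hb : 0 < b) :
    ∑' n : ℕ, Real.exp (-b * ((n : ℝ) + 1) ^ 2) ≤ Real.sqrt (π / b) / 2 := by
  apply tsum_le_of_sum_range_le (fun n => (Real.exp_pos _).le)
  intro N
  have hanti : AntitoneOn (fun x : ℝ => Real.exp (-b * x ^ 2)) (Icc (0:ℝ) (0 + N)) := by
    intro x hx y hy hxy
    simp only
    apply Real.exp_le_exp.2
    have h := pow_le_pow_left₀ hx.1 hxy 2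
    nlinarith [hb.le]
  have h1 := hanti.sum_le_integral
  have h2 : ∑ i ∈ Finset.range N, Real.exp (-b * ((i : ℝ) + 1) ^ 2)
      = ∑ i ∈ Finset.range N, (fun x : ℝ => Real.exp (-b * x ^ 2)) ((0:ℝ) + ((i + 1 : ℕ) : ℝ)) := by
    apply Finset.sum_congr rfl
    intro i _
    push_cast
    ring_nf
  rw [h2]
  refine h1.trans ?_
  have hint : IntegrableOn (fun x : ℝ => Real.exp (-b * x ^ 2)) (Ioi 0) volume :=
    (integrable_exp_neg_mul_sq hb).integrableOn
  have h3 : ∫ x in (0:ℝ)..(0 + N), Real.exp (-b * x ^ 2)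
      ≤ ∫ x in Ioi (0:ℝ), Real.exp (-b * x ^ 2) := by
    rw [intervalIntegral.integral_of_le (by positivity)]
    apply setIntegral_mono_set hint
    · exact Filter.Eventually.of_forall fun x => (Real.exp_pos _).le
    · exact Filter.Eventually.of_forall fun x hx => hx.1
  refine h3.trans ?_
  rw [integral_gaussian_Ioi]

lemma gauss_tsum_int_le (b : ℝ) (hb : 0 < b) :
    ∑' n : ℤ, Real.exp (-b * (n : ℝ) ^ 2) ≤ 1 + Real.sqrt (π / b) := by
  have hnat := gauss_summable_nat b hb
  have hshift : Summable (fun n : ℕ => Real.exp (-b * ((n : ℝ) + 1) ^ 2)) := by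
    have := (summable_nat_add_iff 1).mpr hnat
    convert this using 2 with n
    · rfl
    push_cast
    ring_nf
  have hneg : Summable (fun n : ℕ =>
      (fun k : ℤ => Real.exp (-b * (k : ℝ) ^ 2)) (-((n : ℤ) + 1))) := by
    convert hshift using 2 with n
    push_cast
    ring_nf
  rw [tsum_of_nat_of_neg_add_one hnat hneg]
  have c1 : ∑' (n : ℕ), Real.exp (-b * (((n : ℤ) : ℝ)) ^ 2)
      = ∑' (n : ℕ), Real.exp (-b * (n : ℝ) ^ 2) := by
    apply tsum_congr; intro n; push_cast; ring_nf
  have c2 : ∑' (n : ℕ), Real.exp (-b * (((-((n : ℤ) + 1)) : ℤ) : ℝ) ^ 2)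
      = ∑' (n : ℕ), Real.exp (-b * ((n : ℝ) + 1) ^ 2) := by
    apply tsum_congr; intro n; push_cast; ring_nf
  rw [c1, c2]
  have e0 : ∑' n : ℕ, Real.exp (-b * (n : ℝ) ^ 2)
      = 1 + ∑' n : ℕ, Real.exp (-b * ((n : ℝ) + 1) ^ 2) := by
    rw [Summable.tsum_eq_zero_add hnat]
    congr 1
    · norm_num
    · apply tsum_congr; intro n; push_cast; ring_nf
  rw [e0]
  have := gauss_tail_nat b hb
  linarith

/-- Tail bound for lattice Gaussian sums on the reciprocal lattice
`𝒦² = {(2πn₁/L_x, 2πn₂/L_y) : n₁, n₂ ∈ ℤ}`: for `s, K > 0`, the family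
`k ↦ e^{-s²|k|²/4}` restricted to lattice points with `|k| ≥ K` is summable and
`Σ_{|k| ≥ K} e^{-s²|k|²/4} ≤ (1 + √2 L_x/(s√π))(1 + √2 L_y/(s√π)) e^{-s²K²/8}`. -/
theorem lattice_gaussian_tail_bound (Lx Ly s K : ℝ) (hLx : 0 < Lx) (hLy : 0 < Ly)
    (hs : 0 < s) (hK : 0 < K) :
    (Summable fun n : {n : ℤ × ℤ //
        K ≤ Real.sqrt ((2 * Real.pi * n.1 / Lx) ^ 2 + (2 * Real.pi * n.2 / Ly) ^ 2)} =>
      Real.exp (-(s ^ 2 *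
        ((2 * Real.pi * n.1.1 / Lx) ^ 2 + (2 * Real.pi * n.1.2 / Ly) ^ 2) / 4))) ∧
    (∑' n : {n : ℤ × ℤ //
        K ≤ Real.sqrt ((2 * Real.pi * n.1 / Lx) ^ 2 + (2 * Real.pi * n.2 / Ly) ^ 2)},
        Real.exp (-(s ^ 2 *
          ((2 * Real.pi * n.1.1 / Lx) ^ 2 + (2 * Real.pi * n.1.2 / Ly) ^ 2) / 4))) ≤
      (1 + Real.sqrt 2 * Lx / (s * Real.sqrt Real.pi)) *
        (1 + Real.sqrt 2 * Ly / (s * Real.sqrt Real.pi)) *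
        Real.exp (-(s ^ 2 * K ^ 2 / 8)) := by
  set b1 : ℝ := s ^ 2 * π ^ 2 / (2 * Lx ^ 2) with hb1def
  set b2 : ℝ := s ^ 2 * π ^ 2 / (2 * Ly ^ 2) with hb2def
  have hb1 : 0 < b1 := by positivity
  have hb2 : 0 < b2 := by positivity
  -- key identity
  have key : ∀ n : ℤ × ℤ,
      s ^ 2 * ((2 * π * n.1 / Lx) ^ 2 + (2 * π * n.2 / Ly) ^ 2) / 8
        = b1 * (n.1 : ℝ) ^ 2 + b2 * (n.2 : ℝ) ^ 2 := by
    intro n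
    rw [hb1def, hb2def]
    field_simp
    ring
  -- summability of the full function on ℤ × ℤ
  have hF : Summable (fun n : ℤ × ℤ =>
      Real.exp (-b1 * (n.1 : ℝ) ^ 2) * Real.exp (-b2 * (n.2 : ℝ) ^ 2)) :=
    (gauss_summable_int b1 hb1).mul_of_nonneg (gauss_summable_int b2 hb2)
      (fun _ => (Real.exp_pos _).le) (fun _ => (Real.exp_pos _).le)
  have hG : Summable (fun n : ℤ × ℤ =>
      Real.exp (-(s ^ 2 * ((2 * π * n.1 / Lx) ^ 2 + (2 * π * n.2 / Ly) ^ 2) / 4))) := by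
    have hF2 : Summable (fun n : ℤ × ℤ =>
        Real.exp (-(2*b1) * (n.1 : ℝ) ^ 2) * Real.exp (-(2*b2) * (n.2 : ℝ) ^ 2)) :=
      (gauss_summable_int _ (by positivity)).mul_of_nonneg
        (gauss_summable_int _ (by positivity))
        (fun _ => (Real.exp_pos _).le) (fun _ => (Real.exp_pos _).le)
    refine hF2.congr fun n => ?_
    rw [← Real.exp_add]
    congr 1
    have := key n
    nlinarith [key n]
  have hGsub : Summable (fun n : {n : ℤ × ℤ //
      K ≤ Real.sqrt ((2 * π * n.1 / Lx) ^ 2 + (2 * π * n.2 / Ly) ^ 2)} =>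
      Real.exp (-(s ^ 2 *
        ((2 * π * n.1.1 / Lx) ^ 2 + (2 * π * n.1.2 / Ly) ^ 2) / 4))) :=
    hG.subtype _
  refine ⟨hGsub, ?_⟩
  -- pointwise bound on the subtype
  have hpt : ∀ n : {n : ℤ × ℤ //
      K ≤ Real.sqrt ((2 * π * n.1 / Lx) ^ 2 + (2 * π * n.2 / Ly) ^ 2)},
      Real.exp (-(s ^ 2 *
        ((2 * π * n.1.1 / Lx) ^ 2 + (2 * π * n.1.2 / Ly) ^ 2) / 4))
      ≤ Real.exp (-(s ^ 2 * K ^ 2 / 8)) *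
        (Real.exp (-b1 * (n.1.1 : ℝ) ^ 2) * Real.exp (-b2 * (n.1.2 : ℝ) ^ 2)) := by
    intro m
    set q : ℝ := (2 * π * m.1.1 / Lx) ^ 2 + (2 * π * m.1.2 / Ly) ^ 2 with hq
    have hq0 : 0 ≤ q := by positivity
    have hn : K ≤ Real.sqrt q := m.2
    have hKq : K ^ 2 ≤ q := by
      have := Real.sq_sqrt hq0
      nlinarith [pow_le_pow_left₀ hK.le hn 2]
    rw [← Real.exp_add, ← Real.exp_add]
    apply Real.exp_le_exp.2
    have hk := key m.1
    rw [← hq] at hk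
    have hmul := mul_le_mul_of_nonneg_left hKq (sq_nonneg s)
    clear_value q
    linarith
  calc (∑' n : {n : ℤ × ℤ //
        K ≤ Real.sqrt ((2 * π * n.1 / Lx) ^ 2 + (2 * π * n.2 / Ly) ^ 2)},
        Real.exp (-(s ^ 2 *
          ((2 * π * n.1.1 / Lx) ^ 2 + (2 * π * n.1.2 / Ly) ^ 2) / 4)))
      ≤ ∑' n : {n : ℤ × ℤ //
        K ≤ Real.sqrt ((2 * π * n.1 / Lx) ^ 2 + (2 * π * n.2 / Ly) ^ 2)},
        Real.exp (-(s ^ 2 * K ^ 2 / 8)) *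
          (Real.exp (-b1 * (n.1.1 : ℝ) ^ 2) * Real.exp (-b2 * (n.1.2 : ℝ) ^ 2)) := by
        exact Summable.tsum_le_tsum hpt hGsub (((hF.subtype _)).mul_left _)
    _ = Real.exp (-(s ^ 2 * K ^ 2 / 8)) * ∑' n : {n : ℤ × ℤ //
        K ≤ Real.sqrt ((2 * π * n.1 / Lx) ^ 2 + (2 * π * n.2 / Ly) ^ 2)},
          (Real.exp (-b1 * (n.1.1 : ℝ) ^ 2) * Real.exp (-b2 * (n.1.2 : ℝ) ^ 2)) := by
        exact tsum_mul_left
    _ ≤ Real.exp (-(s ^ 2 * K ^ 2 / 8)) * ∑' n : ℤ × ℤ,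
          (Real.exp (-b1 * (n.1 : ℝ) ^ 2) * Real.exp (-b2 * (n.2 : ℝ) ^ 2)) := by
        apply mul_le_mul_of_nonneg_left _ (Real.exp_pos _).le
        apply Summable.tsum_le_tsum_of_inj (Subtype.val) Subtype.val_injective
          (fun c _ => by positivity) (fun b => le_rfl) (hF.subtype _) hF
    _ = Real.exp (-(s ^ 2 * K ^ 2 / 8)) *
          ((∑' n : ℤ, Real.exp (-b1 * (n : ℝ) ^ 2)) *
           (∑' n : ℤ, Real.exp (-b2 * (n : ℝ) ^ 2))) := by
        rw [Summable.tsum_mul_tsum (gauss_summable_int b1 hb1) (gauss_summable_int b2 hb2) hF]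
    _ ≤ Real.exp (-(s ^ 2 * K ^ 2 / 8)) *
          ((1 + Real.sqrt 2 * Lx / (s * Real.sqrt π)) *
           (1 + Real.sqrt 2 * Ly / (s * Real.sqrt π))) := by
        apply mul_le_mul_of_nonneg_left _ (Real.exp_pos _).le
        have e1 : Real.sqrt (π / b1) = Real.sqrt 2 * Lx / (s * Real.sqrt π) := by
          have h2 : (Real.sqrt 2 * Lx / (s * Real.sqrt π)) ^ 2 = π / b1 := by
            rw [div_pow, mul_pow, mul_pow, Real.sq_sqrt (by norm_num : (2:ℝ) ≥ 0).le,
              Real.sq_sqrt Real.pi_pos.le, hb1def]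
            field_simp
          rw [← h2, Real.sqrt_sq (by positivity)]
        have e2 : Real.sqrt (π / b2) = Real.sqrt 2 * Ly / (s * Real.sqrt π) := by
          have h2 : (Real.sqrt 2 * Ly / (s * Real.sqrt π)) ^ 2 = π / b2 := by
            rw [div_pow, mul_pow, mul_pow, Real.sq_sqrt (by norm_num : (2:ℝ) ≥ 0).le,
              Real.sq_sqrt Real.pi_pos.le, hb2def]
            field_simp
          rw [← h2, Real.sqrt_sq (by positivity)]
        have t1 := gauss_tsum_int_le b1 hb1
        have t2 := gauss_tsum_int_le b2 hb2
        rw [e1] at t1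
        rw [e2] at t2
        apply mul_le_mul t1 t2 (tsum_nonneg fun _ => (Real.exp_pos _).le) (by positivity)
    _ = (1 + Real.sqrt 2 * Lx / (s * Real.sqrt π)) *
          (1 + Real.sqrt 2 * Ly / (s * Real.sqrt π)) *
          Real.exp (-(s ^ 2 * K ^ 2 / 8)) := by ring
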